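/- Let σ : [0,1] → M be a causal curve from x₀ to x₁ in a spacetime equipped with a Kaluza–Klein metric g̃ = g − a²(dy+βω)² on P = M×ℝ, and let σ̃^± be its two lightlike lifts starting at p₀=(x₀,y₀), defined by (y^±)'(λ) = ∓(1/a)|σ'(λ)| − βω(σ'(λ)). Then the arrival fiber coordinate satisfies Y₁^±[σ] = y₀ ∓ (1/a)( L(σ) + (±|q/m|)∫_σ ω ), where a = β^{-1}|q/m| and L(σ)=∫₀¹ √(g(σ',σ')) dλ. Consequently, σ maximizes the charged-particle action I_{x₀,x₁}[σ] = L(σ) + (q/m)∫_σ ω over a causal homotopy class if and only if σ minimizes Y₁^+ (when q/m>0) or maximizes Y₁^- (when q/m<0) over that class. -/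

import Mathlib

open Set intervalIntegral

/-- Fermat-type reformulation. The arrival fiber coordinates of the
two lightlike Kaluza–Klein lifts of a causal curve `σ` are
`Y₁^± [σ] = y₀ ∓ (1/a)(L(σ) ± |q/m| ∫_σ ω)` with `a = |q/m|/β`, and hence `σ`
maximizes the charged-particle action `I = L + (q/m)∫ω` on a causal homotopy
class iff it minimizes `Y₁^+` (for `q/m > 0`), resp. maximizes `Y₁^-` (for
`q/m < 0`), on that class. -/
theorem lightlike_lift_arrival_coordinate_and_fermat_principle
    {M : Type} (qm β y₀ : ℝ) (hqm : qm ≠ 0) (hβ : 0 < β)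
    (a : ℝ) (ha : a = |qm| / β)
    (C : Set (ℝ → M))                 -- a causal homotopy class of curves from x₀ to x₁
    (norms ωs : (ℝ → M) → ℝ → ℝ)      -- pointwise `|σ'(λ)|` and `ω(σ'(λ))`
    (hint : ∀ σ ∈ C, IntervalIntegrable (norms σ) MeasureTheory.volume 0 1 ∧
      IntervalIntegrable (ωs σ) MeasureTheory.volume 0 1)
    (L W : (ℝ → M) → ℝ)               -- length and `∫_σ ω`
    (hL : ∀ σ ∈ C, L σ = ∫ lam in (0:ℝ)..1, norms σ lam)
    (hW : ∀ σ ∈ C, W σ = ∫ lam in (0:ℝ)..1, ωs σ lam)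
    (I : (ℝ → M) → ℝ) (hI : ∀ σ ∈ C, I σ = L σ + qm * W σ)
    (yplus yminus : (ℝ → M) → ℝ → ℝ)  -- fiber coordinates of the lightlike lifts
    (hyp0 : ∀ σ ∈ C, yplus σ 0 = y₀) (hym0 : ∀ σ ∈ C, yminus σ 0 = y₀)
    (hyp' : ∀ σ ∈ C, ∀ lam ∈ Icc (0:ℝ) 1,
      HasDerivAt (yplus σ) (-(1 / a) * norms σ lam - β * ωs σ lam) lam)
    (hym' : ∀ σ ∈ C, ∀ lam ∈ Icc (0:ℝ) 1,
      HasDerivAt (yminus σ) ((1 / a) * norms σ lam - β * ωs σ lam) lam)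
    (σ : ℝ → M) (hσ : σ ∈ C) :
    (∀ τ ∈ C, yplus τ 1 = y₀ - (1 / a) * (L τ + |qm| * W τ) ∧
      yminus τ 1 = y₀ + (1 / a) * (L τ - |qm| * W τ)) ∧
    (0 < qm → ((∀ τ ∈ C, I τ ≤ I σ) ↔ (∀ τ ∈ C, yplus σ 1 ≤ yplus τ 1))) ∧
    (qm < 0 → ((∀ τ ∈ C, I τ ≤ I σ) ↔ (∀ τ ∈ C, yminus τ 1 ≤ yminus σ 1))) := by
  have hqa : 0 < |qm| := abs_pos.mpr hqm
  have haa : 0 < a := ha ▸ div_pos hqa hβ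
  have hβa : β = |qm| / a := by
    field_simp [ha]
    rw [ha]; field_simp [hβ.ne']
  have key : ∀ τ ∈ C, yplus τ 1 = y₀ - (1 / a) * (L τ + |qm| * W τ) ∧
      yminus τ 1 = y₀ + (1 / a) * (L τ - |qm| * W τ) := by
    intro τ hτ
    obtain ⟨hN, hΩ⟩ := hint τ hτ
    have hu : uIcc (0:ℝ) 1 = Icc 0 1 := uIcc_of_le zero_le_one
    have hip : ∫ lam in (0:ℝ)..1, (-(1 / a) * norms τ lam - β * ωs τ lam)
        = yplus τ 1 - yplus τ 0 := by
      apply integral_eq_sub_of_hasDerivAt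
      · intro x hx; exact hyp' τ hτ x (hu ▸ hx)
      · exact ((hN.const_mul _).sub (hΩ.const_mul _))
    have him : ∫ lam in (0:ℝ)..1, ((1 / a) * norms τ lam - β * ωs τ lam)
        = yminus τ 1 - yminus τ 0 := by
      apply integral_eq_sub_of_hasDerivAt
      · intro x hx; exact hym' τ hτ x (hu ▸ hx)
      · exact ((hN.const_mul _).sub (hΩ.const_mul _))
    rw [integral_sub (hN.const_mul _) (hΩ.const_mul _),
        integral_const_mul, integral_const_mul] at hip
    rw [integral_sub (hN.const_mul _) (hΩ.const_mul _),
        integral_const_mul, integral_const_mul] at him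
    rw [← hL τ hτ, ← hW τ hτ, hyp0 τ hτ] at hip
    rw [← hL τ hτ, ← hW τ hτ, hym0 τ hτ] at him
    constructor
    · linear_combination -hip - W τ * hβa
    · linear_combination -him - W τ * hβa
  refine ⟨key, ?_, ?_⟩
  · intro hq
    have habs : |qm| = qm := abs_of_pos hq
    constructor
    · intro h τ hτ
      rw [(key τ hτ).1, (key σ hσ).1]
      have := h τ hτ
      rw [hI τ hτ, hI σ hσ] at this
      have hmul : (1/a) * (L τ + qm * W τ) ≤ (1/a) * (L σ + qm * W σ) :=
        mul_le_mul_of_nonneg_left this (by positivity)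
      rw [habs]; linarith
    · intro h τ hτ
      have := h τ hτ
      rw [(key τ hτ).1, (key σ hσ).1, habs] at this
      rw [hI τ hτ, hI σ hσ]
      have h2 : (1/a) * (L τ + qm * W τ) ≤ (1/a) * (L σ + qm * W σ) := by linarith
      have := (mul_le_mul_iff_right₀ (by positivity : (0:ℝ) < 1/a)).mp h2
      linarith
  · intro hq
    have habs : |qm| = -qm := abs_of_neg hq
    constructor
    · intro h τ hτ
      rw [(key τ hτ).2, (key σ hσ).2]
      have := h τ hτ
      rw [hI τ hτ, hI σ hσ] at this
      have hmul : (1/a) * (L τ + qm * W τ) ≤ (1/a) * (L σ + qm * W σ) :=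
        mul_le_mul_of_nonneg_left this (by positivity)
      rw [habs]; nlinarith
    · intro h τ hτ
      have := h τ hτ
      rw [(key τ hτ).2, (key σ hσ).2, habs] at this
      rw [hI τ hτ, hI σ hσ]
      have h2 : (1/a) * (L τ - -qm * W τ) ≤ (1/a) * (L σ - -qm * W σ) := by linarith
      have := (mul_le_mul_iff_right₀ (by positivity : (0:ℝ) < 1/a)).mp h2
      linarith
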